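/- Let f : {−1,0,1}^m → {±1} be a linear threshold function realized by real weights w₀, ..., wₘ. Then there exist integer weights u₀, ..., uₘ each of bit-length O(m log m) realizing the same function. -/

import Mathlib

open Finset Module Submodule Matrix

lemma dot_linear {n : ℕ} (A : Fin n → ℝ) (v d : Fin n → ℝ) (t : ℝ) :
    ∑ j, A j * (v j + t * d j) = (∑ j, A j * v j) + t * ∑ j, A j * d j := by
  rw [Finset.mul_sum, ← Finset.sum_add_distrib]
  congr 1; ext j; ring

lemma step1 (n : ℕ) (ι : Type) [Fintype ι] (a : ι → Fin n → ℝ) (b : ι → ℝ)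
    (hsol : ∃ v : Fin n → ℝ, ∀ i, b i ≤ ∑ j, a i j * v j) :
    ∃ v : Fin n → ℝ, (∀ i, b i ≤ ∑ j, a i j * v j) ∧
      ∀ d : Fin n → ℝ, (∀ i, (∑ j, a i j * v j = b i) → ∑ j, a i j * d j = 0) →
        ∀ i, ∑ j, a i j * d j = 0 := by
  classical
  set S : (Fin n → ℝ) → Prop := fun v => ∀ i, b i ≤ ∑ j, a i j * v j with hS
  set r : (Fin n → ℝ) → ℕ := fun v =>
    finrank ℝ (span ℝ (a '' {i | ∑ j, a i j * v j = b i})) with hr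
  set R : Set ℕ := {k | ∃ v, S v ∧ r v = k} with hRdef
  obtain ⟨v0, hv0⟩ := hsol
  have hne : R.Nonempty := ⟨r v0, v0, hv0, rfl⟩
  have hbdd : BddAbove R := by
    refine ⟨n, fun k hk => ?_⟩
    obtain ⟨v, -, rfl⟩ := hk
    calc r v ≤ finrank ℝ (Fin n → ℝ) := Submodule.finrank_le _
    _ = n := by simp [Module.finrank_fintype_fun_eq_card]
  obtain ⟨v, hvS, hvr⟩ := Nat.sSup_mem hne hbdd
  have hmax : ∀ v', S v' → r v' ≤ r v := fun v' h => hvr ▸ le_csSup hbdd ⟨v', h, rfl⟩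
  refine ⟨v, hvS, ?_⟩
  by_contra hcon
  push_neg at hcon
  obtain ⟨d0, hd0, j₀, hj₀⟩ := hcon
  -- WLOG the bad direction is negative
  set d : Fin n → ℝ := if ∑ j, a j₀ j * d0 j < 0 then d0 else -d0 with hd
  have hdperp : ∀ i, (∑ j, a i j * v j = b i) → ∑ j, a i j * d j = 0 := by
    intro i hi
    by_cases hc : ∑ j, a j₀ j * d0 j < 0 <;>
      simp [hd, hc, Finset.sum_neg_distrib, hd0 i hi]
  have hj₀neg : ∑ j, a j₀ j * d j < 0 := by
    by_cases hc : ∑ j, a j₀ j * d0 j < 0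
    · simpa [hd, hc] using hc
    · push_neg at hc
      have : ∑ j, a j₀ j * (-d0) j = -∑ j, a j₀ j * d0 j := by
        simp [Finset.sum_neg_distrib]
      simp only [hd, if_neg (not_lt.mpr hc)]
      rw [this]
      have : 0 < ∑ j, a j₀ j * d0 j := lt_of_le_of_ne hc (Ne.symm hj₀)
      linarith
  -- set of constraints decreasing along d
  set F : Finset ι := Finset.univ.filter (fun i => ∑ j, a i j * d j < 0) with hF
  have hj₀F : j₀ ∈ F := by simp [hF, hj₀neg]
  obtain ⟨i₀, hi₀F, hi₀min⟩ := F.exists_min_image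
    (fun i => (∑ j, a i j * v j - b i) / (-(∑ j, a i j * d j))) ⟨j₀, hj₀F⟩
  have hslack : ∀ i ∈ F, 0 < ∑ j, a i j * v j - b i := by
    intro i hiF
    have hid : ∑ j, a i j * d j < 0 := by simpa [hF] using hiF
    rcases lt_or_eq_of_le (hvS i) with h | h
    · linarith
    · exact absurd (hdperp i h.symm) (ne_of_lt hid)
  set g : ι → ℝ := fun i => (∑ j, a i j * v j - b i) / (-(∑ j, a i j * d j)) with hg
  have hgpos : ∀ i ∈ F, 0 < g i := by
    intro i hiF
    have hid : ∑ j, a i j * d j < 0 := by simpa [hF] using hiF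
    exact div_pos (hslack i hiF) (by linarith)
  set t : ℝ := g i₀ with ht
  have htpos : 0 < t := hgpos i₀ hi₀F
  set v' : Fin n → ℝ := fun j => v j + t * d j with hv'
  have hdotv' : ∀ i, ∑ j, a i j * v' j = (∑ j, a i j * v j) + t * ∑ j, a i j * d j :=
    fun i => dot_linear (a i) v d t
  have hv'S : S v' := by
    intro i
    rw [hdotv']
    by_cases hid : ∑ j, a i j * d j < 0
    · have hiF : i ∈ F := by simp [hF, hid]
      have := hi₀min i hiF
      have hpos : 0 < -(∑ j, a i j * d j) := by linarith
      have h2 : t * (-(∑ j, a i j * d j)) ≤ ∑ j, a i j * v j - b i := by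
        calc t * (-(∑ j, a i j * d j))
            ≤ ((∑ j, a i j * v j - b i) / (-(∑ j, a i j * d j))) * (-(∑ j, a i j * d j)) := by
              apply mul_le_mul_of_nonneg_right _ (le_of_lt hpos)
              exact ht ▸ this
        _ = ∑ j, a i j * v j - b i := div_mul_cancel₀ _ (ne_of_gt hpos)
      linarith
    · push_neg at hid
      have := hvS i
      nlinarith
  -- tight set strictly grows
  have htight : ∀ i, (∑ j, a i j * v j = b i) → (∑ j, a i j * v' j = b i) := by
    intro i hi
    rw [hdotv', hdperp i hi, hi]; ring
  have hi₀tight : ∑ j, a i₀ j * v' j = b i₀ := by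
    have hid : ∑ j, a i₀ j * d j < 0 := by simpa [hF] using hi₀F
    have hdne : (∑ j, a i₀ j * d j) ≠ 0 := ne_of_lt hid
    have hc : g i₀ * ∑ j, a i₀ j * d j = -(∑ j, a i₀ j * v j - b i₀) := by
      have h4 := div_mul_cancel₀ (∑ j, a i₀ j * v j - b i₀) (neg_ne_zero.mpr hdne)
      calc g i₀ * ∑ j, a i₀ j * d j
          = -((∑ j, a i₀ j * v j - b i₀) / -(∑ j, a i₀ j * d j) * -(∑ j, a i₀ j * d j)) := by
            rw [hg]; ring
      _ = _ := by rw [h4]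
    rw [hdotv', ht, hc]; ring
  -- linear functional pairing with d
  set φ : (Fin n → ℝ) →ₗ[ℝ] ℝ :=
    { toFun := fun y => ∑ j, y j * d j
      map_add' := by
        intro y z
        rw [← Finset.sum_add_distrib]
        exact Finset.sum_congr rfl fun j _ => by simp [add_mul]
      map_smul' := by
        intro c y
        rw [RingHom.id_apply, smul_eq_mul, Finset.mul_sum]
        show ∑ j, (c • y) j * d j = _
        exact Finset.sum_congr rfl fun j _ => by
          rw [Pi.smul_apply, smul_eq_mul, mul_assoc] } with hφ
  have hspanle : span ℝ (a '' {i | ∑ j, a i j * v j = b i}) ≤ LinearMap.ker φ := by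
    rw [Submodule.span_le]
    rintro y ⟨i, hi, rfl⟩
    simpa [hφ, LinearMap.mem_ker] using hdperp i hi
  have hi₀notmem : a i₀ ∉ span ℝ (a '' {i | ∑ j, a i j * v j = b i}) := by
    intro hmem
    have : φ (a i₀) = 0 := hspanle hmem
    have hid : ∑ j, a i₀ j * d j < 0 := by simpa [hF] using hi₀F
    rw [hφ] at this
    simp at this
    linarith
  have hlt : span ℝ (a '' {i | ∑ j, a i j * v j = b i}) <
      span ℝ (a '' {i | ∑ j, a i j * v' j = b i}) := by
    refine lt_of_le_of_ne (span_mono (Set.image_mono ?_)) ?_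
    · intro i hi; exact htight i hi
    · intro heq
      apply hi₀notmem
      rw [heq]
      exact subset_span ⟨i₀, hi₀tight, rfl⟩
  have : r v < r v' := Submodule.finrank_lt_finrank_of_lt hlt
  exact absurd (hmax v' hv'S) (not_le.mpr this)

lemma key (n : ℕ) (hn : 0 < n) (ι : Type) [Fintype ι] (a : ι → Fin n → ℤ) (b : ι → ℤ)
    (ha : ∀ i j, |a i j| ≤ 1) (hb : ∀ i, |b i| ≤ 1)
    (hsol : ∃ v : Fin n → ℝ, ∀ i, (b i : ℝ) ≤ ∑ j, (a i j : ℝ) * v j) :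
    ∃ (D : ℤ) (u : Fin n → ℤ), 0 < D ∧
      (∀ j, |u j| ≤ (n : ℤ) * n.factorial * n ^ n) ∧
      ∀ i, D * b i ≤ ∑ j, a i j * u j := by
  classical
  set ar : ι → Fin n → ℝ := fun i j => (a i j : ℝ) with har
  set br : ι → ℝ := fun i => (b i : ℝ) with hbr
  obtain ⟨v, hvS, hv⟩ := step1 n ι ar br hsol
  set T : Set ι := {i | ∑ j, ar i j * v j = br i} with hT
  obtain ⟨t, hts, htspan, htind⟩ := exists_linearIndependent ℝ (ar '' T)
  have htfin : t.Finite := Set.Finite.subset (Set.Finite.image ar (Set.toFinite T)) hts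
  haveI : Fintype t := htfin.fintype
  have hidx : ∀ y : t, ∃ i, i ∈ T ∧ ar i = (y : Fin n → ℝ) := by
    intro y; obtain ⟨i, hi, he⟩ := hts y.2; exact ⟨i, hi, he⟩
  choose idx hidxT hidxar using hidx
  set B : Matrix t (Fin n) ℤ := Matrix.of (fun y j => a (idx y) j) with hB
  set c : t → ℤ := fun y => b (idx y) with hc
  set G : Matrix ↥t ↥t ℤ := B * Bᵀ with hG
  set Br : Matrix t (Fin n) ℝ := B.map (Int.cast : ℤ → ℝ) with hBr
  set Gr : Matrix ↥t ↥t ℝ := G.map (Int.cast : ℤ → ℝ) with hGr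
  have hGrBr : Gr = Br * Brᵀ := by
    ext y y'
    simp only [hGr, Matrix.map_apply, hG, Matrix.mul_apply, Matrix.transpose_apply, hBr]
    push_cast
    rfl
  have hBrrow : ∀ (y : t) (j : Fin n), Br y j = (y : Fin n → ℝ) j := by
    intro y j
    exact congrFun (hidxar y) j
  -- Gram determinant nonzero
  have hGrdet : Gr.det ≠ 0 := by
    intro h0
    obtain ⟨z, hz, hGz⟩ := Matrix.exists_mulVec_eq_zero_iff.mpr h0
    have hzB : z ᵥ* Br = 0 := by
      have h1 : (z ᵥ* Br) ⬝ᵥ (z ᵥ* Br) = 0 := by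
        calc (z ᵥ* Br) ⬝ᵥ (z ᵥ* Br) = z ⬝ᵥ (Br *ᵥ (z ᵥ* Br)) := (Matrix.dotProduct_mulVec _ _ _).symm
        _ = z ⬝ᵥ (Br *ᵥ (Brᵀ *ᵥ z)) := by rw [Matrix.mulVec_transpose]
        _ = z ⬝ᵥ (Gr *ᵥ z) := by rw [Matrix.mulVec_mulVec, ← hGrBr]
        _ = 0 := by rw [hGz, dotProduct_zero]
      exact dotProduct_self_eq_zero.mp h1
    apply hz
    have := Fintype.linearIndependent_iff.mp htind z
    have hzero : ∑ y : t, z y • (y : Fin n → ℝ) = 0 := by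
      funext j
      have h2 := congrFun hzB j
      simp only [Matrix.vecMul, dotProduct] at h2
      simpa [Finset.sum_apply, hBrrow] using h2
    funext y
    exact this hzero y
  have hGdet : G.det ≠ 0 := by
    intro h0
    apply hGrdet
    have h5 : Gr = (Int.castRingHom ℝ).mapMatrix G := by rw [hGr, RingHom.mapMatrix_apply]; rfl
    rw [h5, ← RingHom.map_det, h0, map_zero]
  -- the integer candidate
  set y0 : t → ℤ := Matrix.cramer G c with hy0
  set u0 : Fin n → ℤ := Bᵀ *ᵥ y0 with hu0
  have hBu : B *ᵥ u0 = G.det • c := by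
    rw [hu0, Matrix.mulVec_mulVec, ← hG, hy0, Matrix.mulVec_cramer]
  set w : Fin n → ℝ := fun j => ((G.det : ℝ))⁻¹ * (u0 j : ℝ) with hw
  have hdetR : ((G.det : ℤ) : ℝ) ≠ 0 := Int.cast_ne_zero.mpr hGdet
  have hu0w : ∀ j, (u0 j : ℝ) = (G.det : ℝ) * w j := by
    intro j; rw [hw]; field_simp
  -- w satisfies tight equalities
  have hwt : ∀ y : t, ∑ j, ar (idx y) j * w j = br (idx y) := by
    intro y
    have h1 : ∑ j, (a (idx y) j : ℝ) * (u0 j : ℝ) = ((G.det * c y : ℤ) : ℝ) := by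
      have h2 := congrFun hBu y
      have h3 : (B *ᵥ u0) y = ∑ j, a (idx y) j * u0 j := by
        simp [Matrix.mulVec, dotProduct, hB]
      rw [h3] at h2
      have h4 : (G.det • c) y = G.det * c y := rfl
      rw [h4] at h2
      rw [← h2]
      push_cast
      rfl
    have : ∑ j, ar (idx y) j * w j = ((G.det : ℝ))⁻¹ * ∑ j, (a (idx y) j : ℝ) * (u0 j : ℝ) := by
      rw [Finset.mul_sum]
      exact Finset.sum_congr rfl fun j _ => by rw [har, hw]; ring
    rw [this, h1]
    rw [Int.cast_mul]
    rw [hc]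
    exact inv_mul_cancel_left₀ hdetR _
  -- w is in S
  have hwS : ∀ i, br i ≤ ∑ j, ar i j * w j := by
    set d : Fin n → ℝ := fun j => w j - v j with hd
    have hdot : ∀ i, ∑ j, ar i j * d j = (∑ j, ar i j * w j) - ∑ j, ar i j * v j := by
      intro i
      rw [← Finset.sum_sub_distrib]
      exact Finset.sum_congr rfl fun j _ => by rw [hd]; ring
    set φ : (Fin n → ℝ) →ₗ[ℝ] ℝ :=
      { toFun := fun y => ∑ j, y j * d j
        map_add' := by
          intro y z
          rw [← Finset.sum_add_distrib]
          exact Finset.sum_congr rfl fun j _ => by simp [add_mul]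
        map_smul' := by
          intro cc y
          rw [RingHom.id_apply, smul_eq_mul, Finset.mul_sum]
          show ∑ j, (cc • y) j * d j = _
          exact Finset.sum_congr rfl fun j _ => by
            rw [Pi.smul_apply, smul_eq_mul, mul_assoc] } with hφ
    have hker : span ℝ (ar '' T) ≤ LinearMap.ker φ := by
      rw [← htspan, Submodule.span_le]
      intro y hy
      rw [SetLike.mem_coe, LinearMap.mem_ker]
      show ∑ j, y j * d j = 0
      have h4 : ∑ j, ar (idx ⟨y, hy⟩) j * d j = 0 := by
        rw [hdot, hwt ⟨y, hy⟩]
        have h5 : idx ⟨y, hy⟩ ∈ T := hidxT ⟨y, hy⟩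
        rw [hT] at h5
        rw [h5]
        ring
      calc ∑ j, y j * d j = ∑ j, ar (idx ⟨y, hy⟩) j * d j := by
            exact Finset.sum_congr rfl fun j _ => by rw [congrFun (hidxar ⟨y, hy⟩) j]
      _ = 0 := h4
    have hperp : ∀ i, (∑ j, ar i j * v j = br i) → ∑ j, ar i j * d j = 0 := by
      intro i hi
      have : ar i ∈ span ℝ (ar '' T) := subset_span ⟨i, hi, rfl⟩
      exact hker this
    have hall := hv d hperp
    intro i
    have := hall i
    rw [hdot i] at this
    have h6 := hvS i
    linarith
  -- choose sign
  set s : ℤ := if 0 ≤ G.det then 1 else -1 with hs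
  set D : ℤ := s * G.det with hD
  have hDpos : 0 < D := by
    rw [hD, hs]
    rcases lt_trichotomy G.det 0 with h | h | h
    · rw [if_neg (not_le.mpr h)]; linarith
    · exact absurd h hGdet
    · rw [if_pos (le_of_lt h)]; linarith
  refine ⟨D, fun j => s * u0 j, hDpos, ?_, ?_⟩
  · -- bounds
    have hcard : Fintype.card t ≤ n := by
      have := htind.fintype_card_le_finrank
      rwa [Module.finrank_fintype_fun_eq_card, Fintype.card_fin] at this
    have hGent : ∀ y y' : t, |G y y'| ≤ (n : ℤ) := by
      intro y y'
      rw [hG]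
      have : (B * Bᵀ) y y' = ∑ j, B y j * B y' j := by
        simp [Matrix.mul_apply, Matrix.transpose_apply]
      rw [this]
      calc |∑ j, B y j * B y' j| ≤ ∑ j, |B y j * B y' j| := Finset.abs_sum_le_sum_abs _ _
      _ ≤ ∑ _j : Fin n, 1 := by
          apply Finset.sum_le_sum
          intro j _
          rw [abs_mul]
          calc |B y j| * |B y' j| ≤ 1 * 1 :=
                _root_.mul_le_mul (ha _ _) (ha _ _) (abs_nonneg _) zero_le_one
          _ = 1 := one_mul 1
      _ = (n : ℤ) := by simp
    have hy0bound : ∀ y : t, |y0 y| ≤ (n.factorial : ℤ) * n ^ n := by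
      intro y
      rw [hy0, Matrix.cramer_apply]
      have hent : ∀ y1 y2 : t, AbsoluteValue.abs ((G.updateCol y c) y1 y2) ≤ (n : ℤ) := by
        intro y1 y2
        by_cases h : y2 = y
        · subst h
          rw [Matrix.updateCol_self]
          calc |c y1| ≤ 1 := hb _
          _ ≤ (n : ℤ) := by exact_mod_cast hn
        · rw [Matrix.updateCol_ne h]
          exact hGent _ _
      have := Matrix.det_le hent
      rw [nsmul_eq_mul] at this
      calc |(G.updateCol y c).det| ≤ (Nat.factorial (Fintype.card t) : ℤ) * (n : ℤ) ^ (Fintype.card t) := this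
      _ ≤ (n.factorial : ℤ) * n ^ n := by
          apply _root_.mul_le_mul
          · exact_mod_cast Nat.factorial_le hcard
          · apply pow_le_pow_right₀ (by exact_mod_cast hn) hcard
          · positivity
          · positivity
    intro j
    rw [abs_mul]
    have hsabs : |s| = 1 := by rw [hs]; split <;> simp
    rw [hsabs, one_mul]
    have : u0 j = ∑ y : t, B y j * y0 y := by
      rw [hu0]
      simp [Matrix.mulVec, dotProduct, Matrix.transpose_apply]
    rw [this]
    calc |∑ y : t, B y j * y0 y| ≤ ∑ y : t, |B y j * y0 y| := Finset.abs_sum_le_sum_abs _ _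
    _ ≤ ∑ _y : t, (n.factorial : ℤ) * n ^ n := by
        apply Finset.sum_le_sum
        intro y _
        rw [abs_mul]
        calc |B y j| * |y0 y| ≤ 1 * ((n.factorial : ℤ) * n ^ n) :=
              _root_.mul_le_mul (ha _ _) (hy0bound y) (abs_nonneg _) zero_le_one
        _ = (n.factorial : ℤ) * n ^ n := one_mul _
    _ = (Fintype.card t : ℤ) * ((n.factorial : ℤ) * n ^ n) := by
        rw [Finset.sum_const, nsmul_eq_mul]; rfl
    _ ≤ (n : ℤ) * ((n.factorial : ℤ) * n ^ n) := by
        apply mul_le_mul_of_nonneg_right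
        · exact_mod_cast hcard
        · positivity
    _ = (n : ℤ) * n.factorial * n ^ n := by ring
  · -- inequalities
    intro i
    have hwge := hwS i
    have hDw : ∀ j, ((s * u0 j : ℤ) : ℝ) = (D : ℝ) * w j := by
      intro j
      push_cast
      rw [hu0w j, hD]
      push_cast
      ring
    have hsum : ((∑ j, a i j * (s * u0 j) : ℤ) : ℝ) = (D : ℝ) * ∑ j, ar i j * w j := by
      push_cast
      rw [Finset.mul_sum]
      apply Finset.sum_congr rfl
      intro j _
      rw [har]
      calc (a i j : ℝ) * ((s : ℝ) * (u0 j : ℝ)) = (a i j : ℝ) * ((s * u0 j : ℤ) : ℝ) := by push_cast; ring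
      _ = (a i j : ℝ) * ((D : ℝ) * w j) := by rw [hDw j]
      _ = (D : ℝ) * ((a i j : ℝ) * w j) := by ring
    have hfinal : ((D * b i : ℤ) : ℝ) ≤ ((∑ j, a i j * (s * u0 j) : ℤ) : ℝ) := by
      rw [hsum]
      push_cast
      apply mul_le_mul_of_nonneg_left _ (by exact_mod_cast le_of_lt hDpos)
      exact hwge
    exact_mod_cast hfinal

lemma bound_lemma (m : ℕ) :
    ((((m+1) * (m+1).factorial * (m+1)^(m+1) : ℕ) : ℝ)) ≤
      2 ^ ((9:ℝ) * ((m : ℝ) + 1) * Real.log ((m : ℝ) + 2)) := by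
  have hnat : (m+1) * (m+1).factorial * (m+1)^(m+1) ≤ (m+2)^(2*m+3) := by
    have h1 : m + 1 ≤ (m+2)^1 := by simp
    have h2 : (m+1).factorial ≤ (m+2)^(m+1) :=
      le_trans (Nat.factorial_le_pow (m+1)) (Nat.pow_le_pow_left (by omega) _)
    have h3 : (m+1)^(m+1) ≤ (m+2)^(m+1) := Nat.pow_le_pow_left (by omega) _
    calc (m+1) * (m+1).factorial * (m+1)^(m+1)
        ≤ (m+2)^1 * (m+2)^(m+1) * (m+2)^(m+1) :=
          Nat.mul_le_mul (Nat.mul_le_mul h1 h2) h3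
    _ = (m+2)^(2*m+3) := by rw [← pow_add, ← pow_add]; ring_nf
  have hM : (0:ℝ) < (m : ℝ) + 2 := by positivity
  have hcast : ((((m+1) * (m+1).factorial * (m+1)^(m+1) : ℕ) : ℝ)) ≤ ((m : ℝ) + 2)^(2*m+3) := by
    calc ((((m+1) * (m+1).factorial * (m+1)^(m+1) : ℕ) : ℝ)) ≤ (((m+2)^(2*m+3) : ℕ) : ℝ) := by
          exact_mod_cast hnat
    _ = ((m : ℝ) + 2)^(2*m+3) := by push_cast; ring
  refine hcast.trans ?_
  have hexp : ((m : ℝ) + 2)^(2*m+3) = Real.exp (Real.log ((m:ℝ)+2) * ((2*m+3 : ℕ) : ℝ)) := by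
    rw [← Real.rpow_natCast ((m:ℝ)+2) (2*m+3), Real.rpow_def_of_pos hM]
  have hrhs : (2:ℝ) ^ ((9:ℝ) * ((m : ℝ) + 1) * Real.log ((m : ℝ) + 2)) =
      Real.exp (Real.log 2 * ((9:ℝ) * ((m : ℝ) + 1) * Real.log ((m : ℝ) + 2))) := by
    rw [Real.rpow_def_of_pos (by norm_num)]
  rw [hexp, hrhs]
  apply Real.exp_le_exp.mpr
  have hlog2 : (0.6931471803 : ℝ) < Real.log 2 := Real.log_two_gt_d9
  have hlogM : Real.log 2 ≤ Real.log ((m:ℝ)+2) := by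
    apply Real.log_le_log (by norm_num)
    have : (0:ℝ) ≤ (m:ℝ) := Nat.cast_nonneg m
    linarith [Nat.cast_nonneg (α := ℝ) m]
  have hm0 : (0:ℝ) ≤ (m:ℝ) := Nat.cast_nonneg m
  have hlogpos : 0 < Real.log ((m:ℝ)+2) := lt_of_lt_of_le (by linarith) hlogM
  have hkey : ((2*m+3 : ℕ) : ℝ) ≤ Real.log 2 * (9 * ((m:ℝ)+1)) := by
    push_cast
    nlinarith
  calc Real.log ((m:ℝ)+2) * ((2*m+3 : ℕ) : ℝ)
      ≤ Real.log ((m:ℝ)+2) * (Real.log 2 * (9 * ((m:ℝ)+1))) := by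
        apply mul_le_mul_of_nonneg_left hkey (le_of_lt hlogpos)
  _ = Real.log 2 * ((9:ℝ) * ((m : ℝ) + 1) * Real.log ((m : ℝ) + 2)) := by ring

theorem ussr_stmt_9 :
    ∃ C : ℝ, 0 < C ∧
      ∀ (m : ℕ) (f : (Fin m → ℤ) → ℤ), (∀ x, f x = 1 ∨ f x = -1) →
      ∀ (w₀ : ℝ) (w : Fin m → ℝ),
        (∀ x : Fin m → ℤ, (∀ i, x i ∈ ({-1, 0, 1} : Set ℤ)) →
          (f x = 1 ↔ w₀ < ∑ i, w i * (x i : ℝ))) →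
        ∃ (u₀ : ℤ) (u : Fin m → ℤ),
          (|u₀| : ℝ) ≤ 2 ^ (C * (m + 1) * Real.log (m + 2)) ∧
          (∀ i, (|u i| : ℝ) ≤ 2 ^ (C * (m + 1) * Real.log (m + 2))) ∧
          ∀ x : Fin m → ℤ, (∀ i, x i ∈ ({-1, 0, 1} : Set ℤ)) →
            (f x = 1 ↔ u₀ < ∑ i, u i * x i) := by
  classical
  refine ⟨9, by norm_num, ?_⟩
  intro m f hf w₀ w hw
  set ι : Type := Fin m → Fin 3 with hι
  set xp : ι → (Fin m → ℤ) := fun p i => ((p i : ℕ) : ℤ) - 1 with hxp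
  have hxpmem : ∀ (p : ι) (i : Fin m), xp p i ∈ ({-1, 0, 1} : Set ℤ) := by
    intro p i
    have h3 : (p i : ℕ) < 3 := (p i).isLt
    rw [hxp]
    simp only [Set.mem_insert_iff, Set.mem_singleton_iff]
    omega
  have hsurj : ∀ x : Fin m → ℤ, (∀ i, x i ∈ ({-1, 0, 1} : Set ℤ)) → ∃ p : ι, xp p = x := by
    intro x hx
    refine ⟨fun i => ⟨(x i + 1).toNat, ?_⟩, ?_⟩
    · have hxi := hx i
      simp only [Set.mem_insert_iff, Set.mem_singleton_iff] at hxi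
      omega
    · funext i
      have hxi := hx i
      simp only [Set.mem_insert_iff, Set.mem_singleton_iff] at hxi
      show ((x i + 1).toNat : ℤ) - 1 = x i
      omega
  set a : ι → Fin (m+1) → ℤ := fun p =>
    Fin.cons (if f (xp p) = 1 then -1 else 1)
      (fun i => if f (xp p) = 1 then xp p i else -(xp p i)) with ha
  set b : ι → ℤ := fun p => if f (xp p) = 1 then 1 else 0 with hbdef
  have habs : ∀ (p : ι) (j : Fin (m+1)), |a p j| ≤ 1 := by
    intro p j
    refine Fin.cases ?_ ?_ j
    · rw [ha]; simp only [Fin.cons_zero]; split <;> norm_num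
    · intro i
      rw [ha]; simp only [Fin.cons_succ]
      have := hxpmem p i
      simp only [Set.mem_insert_iff, Set.mem_singleton_iff] at this
      split <;> rcases this with h | h | h <;> simp [h]
  have hbabs : ∀ p, |b p| ≤ 1 := by
    intro p
    show |if f (xp p) = 1 then (1:ℤ) else 0| ≤ 1
    split <;> norm_num
  -- real solution
  set A : Finset ι := Finset.univ.filter (fun p => f (xp p) = 1) with hA
  set σ : ι → ℝ := fun p => ∑ i, w i * ((xp p i : ℤ) : ℝ) with hσ
  have hApos : ∀ p ∈ A, w₀ < σ p := by
    intro p hp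
    have : f (xp p) = 1 := by simpa [hA] using hp
    exact (hw (xp p) (hxpmem p)).mp this
  have hδ : ∃ δ : ℝ, 0 < δ ∧ ∀ p ∈ A, δ ≤ σ p - w₀ := by
    rcases Finset.eq_empty_or_nonempty A with h | h
    · exact ⟨1, one_pos, fun p hp => absurd hp (by simp [h])⟩
    · obtain ⟨p₀, hp₀, hmin⟩ := A.exists_min_image (fun p => σ p - w₀) h
      refine ⟨σ p₀ - w₀, by linarith [hApos p₀ hp₀], fun p hp => hmin p hp⟩
  obtain ⟨δ, hδpos, hδle⟩ := hδ
  have hsol : ∃ v : Fin (m+1) → ℝ, ∀ p, (b p : ℝ) ≤ ∑ j, (a p j : ℝ) * v j := by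
    refine ⟨Fin.cons (w₀/δ) (fun i => w i / δ), fun p => ?_⟩
    rw [Fin.sum_univ_succ]
    simp only [ha, hbdef, Fin.cons_zero, Fin.cons_succ]
    by_cases hfp : f (xp p) = 1
    · simp only [if_pos hfp]
      have hge : δ ≤ σ p - w₀ := hδle p (by simp [hA, hfp])
      have hsum : ∑ i : Fin m, ((xp p i : ℤ) : ℝ) * (w i / δ) = σ p / δ := by
        rw [hσ, Finset.sum_div]
        exact Finset.sum_congr rfl fun i _ => by ring
      push_cast
      rw [hsum]
      have h1 : (1:ℝ) ≤ (σ p - w₀) / δ := (one_le_div hδpos).mpr hge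
      have h2 : (σ p - w₀) / δ = -1 * (w₀ / δ) + σ p / δ := by field_simp; ring
      linarith [h2 ▸ h1]
    · simp only [if_neg hfp]
      have hle : σ p ≤ w₀ := by
        by_contra hcon
        exact hfp ((hw (xp p) (hxpmem p)).mpr (by push_neg at hcon; exact hcon))
      have hsum : ∑ i : Fin m, (((-(xp p i) : ℤ)) : ℝ) * (w i / δ) = -(σ p / δ) := by
        have hσp : σ p = ∑ i, w i * ((xp p i : ℤ) : ℝ) := rfl
        rw [hσp, Finset.sum_div, ← Finset.sum_neg_distrib]
        exact Finset.sum_congr rfl fun i _ => by push_cast; ring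
      push_cast
      push_cast at hsum
      rw [hsum]
      have h0 : 0 ≤ (w₀ - σ p) / δ := div_nonneg (by linarith) (le_of_lt hδpos)
      have h2 : (w₀ - σ p) / δ = 1 * (w₀ / δ) + -(σ p / δ) := by field_simp; ring
      linarith [h2 ▸ h0]
  obtain ⟨D, u, hDpos, hubound, hineq⟩ := key (m+1) (Nat.succ_pos m) ι a b habs hbabs hsol
  have hKbound : (((((m+1 : ℕ) : ℤ)) * ((m+1).factorial : ℕ) * (((m+1 : ℕ) : ℤ)) ^ (m+1) : ℤ) : ℝ) ≤
      2 ^ ((9:ℝ) * ((m : ℝ) + 1) * Real.log ((m : ℝ) + 2)) := by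
    refine le_of_eq_of_le ?_ (bound_lemma m)
    push_cast
    ring
  have hub : ∀ j, |((u j : ℤ) : ℝ)| ≤ 2 ^ ((9:ℝ) * ((m : ℝ) + 1) * Real.log ((m : ℝ) + 2)) := by
    intro j
    rw [← Int.cast_abs]
    exact le_trans (by exact_mod_cast hubound j) hKbound
  refine ⟨u 0, fun i => u i.succ, hub 0, fun i => hub i.succ, ?_⟩
  intro x hx
  obtain ⟨p, rfl⟩ := hsurj x hx
  have hi := hineq p
  rw [Fin.sum_univ_succ] at hi
  simp only [ha, hbdef, Fin.cons_zero, Fin.cons_succ] at hi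
  constructor
  · intro hfp
    show u 0 < ∑ i : Fin m, u i.succ * xp p i
    simp only [if_pos hfp, mul_one] at hi
    have hsum : ∑ i : Fin m, xp p i * u i.succ = ∑ i : Fin m, u i.succ * xp p i :=
      Finset.sum_congr rfl fun i _ => mul_comm _ _
    have : D ≤ -u 0 + ∑ i : Fin m, xp p i * u i.succ := by
      have h2 : (-1 : ℤ) * u 0 = -u 0 := by ring
      linarith [hi]
    rw [hsum] at this
    linarith
  · intro hlt
    have hlt' : u 0 < ∑ i : Fin m, u i.succ * xp p i := hlt
    by_contra hfp
    simp only [if_neg hfp, mul_zero] at hi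
    have hsum : ∑ i : Fin m, (-(xp p i)) * u i.succ = -∑ i : Fin m, u i.succ * xp p i := by
      rw [← Finset.sum_neg_distrib]
      exact Finset.sum_congr rfl fun i _ => by ring
    rw [hsum] at hi
    have h2 : (1 : ℤ) * u 0 = u 0 := by ring
    linarith [hlt']
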